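/- Let K, T ⊆ ℝ^d be unconditional convex sets. Then γ_d(K+T) · γ_d(K ∩ T) ≥ γ_d(K) · γ_d(T). -/

import Mathlib

open scoped Pointwise ENNReal
open MeasureTheory ProbabilityTheory Set

/-- The standard Gaussian probability measure on `ℝ^d`. -/
noncomputable def stdGaussianPi (d : ℕ) : Measure (Fin d → ℝ) :=
  Measure.pi fun _ => gaussianReal 0 1

/-- A set `K ⊆ ℝ^d` is unconditional if it is invariant under all coordinate sign flips. -/
def Unconditional (d : ℕ) (K : Set (Fin d → ℝ)) : Prop :=
  ∀ x ∈ K, ∀ ε : Fin d → ℝ, (∀ i, ε i = 1 ∨ ε i = -1) → (fun i => ε i * x i) ∈ K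

namespace SGCI

/-- helper: `X + Y ≤ P + Q` from `X,Y ≤ P`, `X*Y ≤ P*Q`. -/
lemma adSum {X Y P Q : ℝ} (hX0 : 0 ≤ X) (hY0 : 0 ≤ Y) (hQ0 : 0 ≤ Q)
    (hXP : X ≤ P) (hYP : Y ≤ P) (hXY : X * Y ≤ P * Q) : X + Y ≤ P + Q := by
  rcases eq_or_lt_of_le (hX0.trans hXP) with hP | hP
  · have hX : X = 0 := le_antisymm (hXP.trans hP.symm.le) hX0
    have hY : Y = 0 := le_antisymm (hYP.trans hP.symm.le) hY0
    simp [hX, hY, ← hP]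
    linarith
  · nlinarith [mul_nonneg (sub_nonneg.mpr hXP) (sub_nonneg.mpr hYP)]

/-- Two-point Ahlswede–Daykin lemma. -/
lemma adTwoPoint {a1 b1 c1 d1 a2 b2 c2 d2 : ℝ}
    (ha1 : 0 ≤ a1) (hb1 : 0 ≤ b1) (hc1 : 0 ≤ c1) (hd1 : 0 ≤ d1)
    (ha2 : 0 ≤ a2) (hb2 : 0 ≤ b2) (hc2 : 0 ≤ c2) (hd2 : 0 ≤ d2)
    (h11 : a1 * b1 ≤ c1 * d1) (h12 : a1 * b2 ≤ c2 * d1)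
    (h21 : a2 * b1 ≤ c2 * d1) (h22 : a2 * b2 ≤ c2 * d2) :
    (a1 + a2) * (b1 + b2) ≤ (c1 + c2) * (d1 + d2) := by
  have key : a1 * b2 + a2 * b1 ≤ c2 * d1 + c1 * d2 := by
    apply adSum (mul_nonneg ha1 hb2) (mul_nonneg ha2 hb1)
      (mul_nonneg hc1 hd2) h12 h21
    calc a1 * b2 * (a2 * b1) = (a1 * b1) * (a2 * b2) := by ring
      _ ≤ (c1 * d1) * (c2 * d2) := by
          apply mul_le_mul h11 h22 (mul_nonneg ha2 hb2) (mul_nonneg hc1 hd1)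
      _ = c2 * d1 * (c1 * d2) := by ring
  nlinarith [key, h11, h22]

/-- Ahlswede–Daykin inequality on the chain `{0, …, N-1}`. -/
lemma adChainNat (f g h k : ℕ → ℝ)
    (hf0 : ∀ i, 0 ≤ f i) (hg0 : ∀ i, 0 ≤ g i) (hh0 : ∀ i, 0 ≤ h i) (hk0 : ∀ i, 0 ≤ k i)
    (hyp : ∀ i j, f i * g j ≤ h (max i j) * k (min i j)) :
    ∀ N : ℕ, (∑ i ∈ Finset.range N, f i) * (∑ i ∈ Finset.range N, g i) ≤
      (∑ i ∈ Finset.range N, h i) * (∑ i ∈ Finset.range N, k i) := by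
  intro N
  induction N with
  | zero => simp
  | succ N ih =>
    simp only [Finset.sum_range_succ]
    have hs : ∀ (u : ℕ → ℝ), (∀ i, 0 ≤ u i) → 0 ≤ ∑ i ∈ Finset.range N, u i :=
      fun u hu => Finset.sum_nonneg fun i _ => hu i
    apply adTwoPoint (hs f hf0) (hs g hg0) (hs h hh0) (hs k hk0)
      (hf0 N) (hg0 N) (hh0 N) (hk0 N) ih
    · -- (∑ f) * g N ≤ h N * ∑ k
      rw [Finset.sum_mul, Finset.mul_sum]
      apply Finset.sum_le_sum
      intro i hi
      have hiN : i ≤ N := (Finset.mem_range.mp hi).le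
      have := hyp i N
      rwa [max_eq_right hiN, min_eq_left hiN] at this
    · -- f N * ∑ g ≤ h N * ∑ k
      rw [Finset.mul_sum, Finset.mul_sum]
      apply Finset.sum_le_sum
      intro i hi
      have hiN : i ≤ N := (Finset.mem_range.mp hi).le
      have := hyp N i
      rwa [max_eq_left hiN, min_eq_right hiN] at this
    · have := hyp N N
      simpa using this

/-- Ahlswede–Daykin inequality on the line, for antitone `[0,1]`-valued functions
and a probability measure supported on `[0,∞)` with Lipschitz CDF. -/
lemma adLine (μ : Measure ℝ) [IsProbabilityMeasure μ]
    (hμ0 : μ (Set.Iic (0:ℝ)) = 0)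
    (hLip : ∀ a b : ℝ, μ (Set.Ioc a b) ≤ ENNReal.ofReal (b - a))
    (f g h k : ℝ → ℝ)
    (hf : Antitone f) (hg : Antitone g) (hh : Antitone h) (hk : Antitone k)
    (hf01 : ∀ t, f t ∈ Set.Icc (0:ℝ) 1) (hg01 : ∀ t, g t ∈ Set.Icc (0:ℝ) 1)
    (hh01 : ∀ t, h t ∈ Set.Icc (0:ℝ) 1) (hk01 : ∀ t, k t ∈ Set.Icc (0:ℝ) 1)
    (Hyp : ∀ s t, f s * g t ≤ h (max s t) * k (min s t)) :
    (∫ t, f t ∂μ) * (∫ t, g t ∂μ) ≤ (∫ t, h t ∂μ) * (∫ t, k t ∂μ) := by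
  -- integrability
  have hInt : ∀ (u : ℝ → ℝ), Antitone u → (∀ t, u t ∈ Set.Icc (0:ℝ) 1) → Integrable u μ := by
    intro u hu hu01
    refine Integrable.mono' (integrable_const 1) hu.measurable.aestronglyMeasurable ?_
    filter_upwards with t
    rw [Real.norm_eq_abs, abs_le]
    exact ⟨by linarith [(hu01 t).1], (hu01 t).2⟩
  -- integrals are in [0,1]
  have hI0 : ∀ (u : ℝ → ℝ), (∀ t, u t ∈ Set.Icc (0:ℝ) 1) → 0 ≤ ∫ t, u t ∂μ :=
    fun u hu01 => integral_nonneg fun t => (hu01 t).1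
  have hI1 : ∀ (u : ℝ → ℝ), Antitone u → (∀ t, u t ∈ Set.Icc (0:ℝ) 1) → (∫ t, u t ∂μ) ≤ 1 := by
    intro u hu hu01
    calc ∫ t, u t ∂μ ≤ ∫ _, (1:ℝ) ∂μ :=
          integral_mono (hInt u hu hu01) (integrable_const 1) fun t => (hu01 t).2
      _ = 1 := by simp
  -- main ε-argument
  refine le_of_forall_pos_le_add fun ε hε => ?_
  set δ : ℝ := min (ε / 3) 1 with hδdef
  have hδ0 : 0 < δ := lt_min (by linarith) one_pos
  have hδ1 : δ ≤ 1 := min_le_right _ _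
  have hδε : 3 * δ ≤ ε := by
    have : δ ≤ ε / 3 := min_le_left _ _
    linarith
  -- choose n
  have htail : Filter.Tendsto (fun m : ℕ => μ (Set.Ioi (m:ℝ))) Filter.atTop (nhds 0) := by
    have h1 : Filter.Tendsto (μ ∘ fun m : ℕ => Set.Ioi (m:ℝ)) Filter.atTop
        (nhds (μ (⋂ m : ℕ, Set.Ioi (m:ℝ)))) :=
      tendsto_measure_iInter_atTop (fun m => measurableSet_Ioi.nullMeasurableSet)
        (fun i j hij => Set.Ioi_subset_Ioi (by exact_mod_cast hij)) ⟨0, measure_ne_top μ _⟩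
    have h2 : (⋂ m : ℕ, Set.Ioi (m:ℝ)) = ∅ := by
      ext x
      simp only [Set.mem_iInter, Set.mem_Ioi, Set.mem_empty_iff_false, iff_false, not_forall,
        not_lt]
      obtain ⟨m, hm⟩ := exists_nat_gt x
      exact ⟨m, hm.le⟩
    rw [h2] at h1
    rw [measure_empty] at h1; exact h1
  have hev : ∀ᶠ m : ℕ in Filter.atTop, μ (Set.Ioi (m:ℝ)) < ENNReal.ofReal (δ/2) :=
    htail.eventually_lt_const (by rw [ENNReal.ofReal_pos]; linarith)
  obtain ⟨n₀, hn₀⟩ := Filter.eventually_atTop.mp hev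
  set n : ℕ := max (max n₀ ⌈2/δ⌉₊) 1 with hndef
  have hn1 : 1 ≤ n := le_max_right _ _
  have hnR : (0:ℝ) < n := by exact_mod_cast hn1
  have hnδ : (1:ℝ)/n ≤ δ/2 := by
    have h2δ : (2/δ : ℝ) ≤ n := by
      calc (2/δ:ℝ) ≤ ⌈2/δ⌉₊ := Nat.le_ceil _
        _ ≤ n := by exact_mod_cast (le_max_right n₀ ⌈2/δ⌉₊).trans (le_max_left _ 1)
    calc (1:ℝ)/n ≤ 1/(2/δ) := by
          apply one_div_le_one_div_of_le (by positivity) h2δ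
      _ = δ/2 := by rw [one_div_div]
  have hntail : μ (Set.Ioi ((n:ℕ):ℝ)) < ENNReal.ofReal (δ/2) :=
    hn₀ n ((le_max_left n₀ _).trans (le_max_left _ 1))
  -- set up the partition
  set N : ℕ := n * n with hNdef
  set p : ℕ → ℝ := fun i => (i:ℝ) / n with hpdef
  have hpmono : Monotone p := fun i j hij => by
    have : (i:ℝ) ≤ j := by exact_mod_cast hij
    simp only [hpdef]
    gcongr
  have hp0 : p 0 = 0 := by simp [hpdef]
  have hpN : p N = n := by
    simp only [hpdef, hNdef]
    push_cast
    field_simp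
  have hpstep : ∀ i : ℕ, p (i+1) - p i = 1/n := by
    intro i
    simp only [hpdef]
    push_cast
    field_simp
    ring
  -- the weights
  set W : ℕ → ℝ := fun i =>
    if i < N then (μ (Set.Ioc (p i) (p (i+1)))).toReal else (μ (Set.Ioi (p i))).toReal
    with hWdef
  have hW0 : ∀ i, 0 ≤ W i := fun i => by
    simp only [hWdef]
    split <;> exact ENNReal.toReal_nonneg
  have hWsmall : ∀ i, i < N → W i ≤ 1/n := by
    intro i hi
    simp only [hWdef, if_pos hi]
    apply ENNReal.toReal_le_of_le_ofReal (by positivity)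
    calc μ (Set.Ioc (p i) (p (i+1))) ≤ ENNReal.ofReal (p (i+1) - p i) := hLip _ _
      _ = ENNReal.ofReal (1/n) := by rw [hpstep]
  have hWtail : W N ≤ δ/2 := by
    simp only [hWdef, if_neg (lt_irrefl N), hpN]
    exact ENNReal.toReal_le_of_le_ofReal (by linarith) hntail.le
  -- decomposition of the integral
  have hdecomp : ∀ (u : ℝ → ℝ), Integrable u μ →
      ∫ t, u t ∂μ = (∑ i ∈ Finset.range N, ∫ t in Set.Ioc (p i) (p (i+1)), u t ∂μ) +
        ∫ t in Set.Ioi (p N), u t ∂μ := by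
    intro u hu
    have hIic : ∀ m : ℕ, ∫ t in Set.Iic (p m), u t ∂μ =
        ∑ i ∈ Finset.range m, ∫ t in Set.Ioc (p i) (p (i+1)), u t ∂μ := by
      intro m
      induction m with
      | zero =>
        rw [hp0, Finset.range_zero, Finset.sum_empty]
        rw [Measure.restrict_eq_zero.mpr hμ0, integral_zero_measure]
      | succ m ih =>
        rw [← Set.Iic_union_Ioc_eq_Iic (hpmono (Nat.le_succ m)),
          setIntegral_union (Set.Iic_disjoint_Ioc le_rfl) measurableSet_Ioc
            hu.integrableOn hu.integrableOn, ih, Finset.sum_range_succ]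
    rw [← hIic N, ← Set.compl_Iic]
    exact (integral_add_compl measurableSet_Iic hu).symm
  -- upper and lower bounds on cell integrals
  have hcellUp : ∀ (u : ℝ → ℝ), Antitone u → (∀ t, u t ∈ Set.Icc (0:ℝ) 1) → ∀ i : ℕ, i < N →
      ∫ t in Set.Ioc (p i) (p (i+1)), u t ∂μ ≤ u (p i) * W i := by
    intro u hu hu01 i hi
    have : ∫ t in Set.Ioc (p i) (p (i+1)), u t ∂μ ≤
        ∫ _ in Set.Ioc (p i) (p (i+1)), u (p i) ∂μ := by
      apply setIntegral_mono_on (hInt u hu hu01).integrableOn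
        (integrableOn_const (measure_lt_top μ _).ne) measurableSet_Ioc
      intro x hx
      exact hu hx.1.le
    rw [setIntegral_const, smul_eq_mul] at this
    calc ∫ t in Set.Ioc (p i) (p (i+1)), u t ∂μ
        ≤ (μ (Set.Ioc (p i) (p (i+1)))).toReal * u (p i) := this
      _ = u (p i) * W i := by rw [hWdef]; simp only [if_pos hi]; ring
  have htailUp : ∀ (u : ℝ → ℝ), Antitone u → (∀ t, u t ∈ Set.Icc (0:ℝ) 1) →
      ∫ t in Set.Ioi (p N), u t ∂μ ≤ u (p N) * W N := by
    intro u hu hu01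
    have : ∫ t in Set.Ioi (p N), u t ∂μ ≤ ∫ _ in Set.Ioi (p N), u (p N) ∂μ := by
      apply setIntegral_mono_on (hInt u hu hu01).integrableOn
        (integrableOn_const (measure_lt_top μ _).ne) measurableSet_Ioi
      intro x hx
      exact hu hx.le
    rw [setIntegral_const, smul_eq_mul] at this
    calc ∫ t in Set.Ioi (p N), u t ∂μ ≤ (μ (Set.Ioi (p N))).toReal * u (p N) := this
      _ = u (p N) * W N := by rw [hWdef]; simp only [if_neg (lt_irrefl N)]; ring
  have hcellLow : ∀ (u : ℝ → ℝ), Antitone u → (∀ t, u t ∈ Set.Icc (0:ℝ) 1) → ∀ i : ℕ, i < N →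
      u (p (i+1)) * W i ≤ ∫ t in Set.Ioc (p i) (p (i+1)), u t ∂μ := by
    intro u hu hu01 i hi
    have : ∫ _ in Set.Ioc (p i) (p (i+1)), u (p (i+1)) ∂μ ≤
        ∫ t in Set.Ioc (p i) (p (i+1)), u t ∂μ := by
      apply setIntegral_mono_on (integrableOn_const (measure_lt_top μ _).ne)
        (hInt u hu hu01).integrableOn measurableSet_Ioc
      intro x hx
      exact hu hx.2
    rw [setIntegral_const, smul_eq_mul] at this
    calc u (p (i+1)) * W i = (μ (Set.Ioc (p i) (p (i+1)))).toReal * u (p (i+1)) := by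
          rw [hWdef]; simp only [if_pos hi]; ring
      _ ≤ _ := this
  -- the discrete sums
  set S : (ℝ → ℝ) → ℝ := fun u => ∑ i ∈ Finset.range (N+1), u (p i) * W i with hSdef
  -- upper bound : ∫ u ≤ S u
  have hSup : ∀ (u : ℝ → ℝ), Antitone u → (∀ t, u t ∈ Set.Icc (0:ℝ) 1) →
      ∫ t, u t ∂μ ≤ S u := by
    intro u hu hu01
    rw [hdecomp u (hInt u hu hu01)]
    simp only [hSdef]
    rw [Finset.sum_range_succ]
    gcongr with i hi
    · exact hcellUp u hu hu01 i (Finset.mem_range.mp hi)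
    · exact htailUp u hu hu01
  -- lower bound : S u ≤ ∫ u + δ
  have hSlow : ∀ (u : ℝ → ℝ), Antitone u → (∀ t, u t ∈ Set.Icc (0:ℝ) 1) →
      S u ≤ (∫ t, u t ∂μ) + δ := by
    intro u hu hu01
    simp only [hSdef]
    rw [Finset.sum_range_succ, hdecomp u (hInt u hu hu01)]
    have step1 : ∑ i ∈ Finset.range N, u (p i) * W i ≤
        (∑ i ∈ Finset.range N, u (p (i+1)) * W i) + 1/n := by
      have : ∑ i ∈ Finset.range N, u (p i) * W i -
          ∑ i ∈ Finset.range N, u (p (i+1)) * W i =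
          ∑ i ∈ Finset.range N, (u (p i) - u (p (i+1))) * W i := by
        rw [← Finset.sum_sub_distrib]
        congr 1
        ext i
        ring
      have hbound : ∑ i ∈ Finset.range N, (u (p i) - u (p (i+1))) * W i ≤
          ∑ i ∈ Finset.range N, (u (p i) - u (p (i+1))) * (1/n) := by
        apply Finset.sum_le_sum
        intro i hi
        apply mul_le_mul_of_nonneg_left (hWsmall i (Finset.mem_range.mp hi))
        exact sub_nonneg.mpr (hu (hpmono (Nat.le_succ i)))
      have htele : ∑ i ∈ Finset.range N, (u (p i) - u (p (i+1))) * (1/n) =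
          (u (p 0) - u (p N)) * (1/n) := by
        rw [← Finset.sum_mul, Finset.sum_range_sub' (fun i => u (p i))]
      have hfinal : (u (p 0) - u (p N)) * (1/n) ≤ 1/n := by
        have h1 : u (p 0) - u (p N) ≤ 1 := by
          have := (hu01 (p 0)).2
          have := (hu01 (p N)).1
          linarith
        have h2 : (0:ℝ) ≤ 1/n := by positivity
        nlinarith
      linarith
    have step2 : ∑ i ∈ Finset.range N, u (p (i+1)) * W i ≤
        ∑ i ∈ Finset.range N, ∫ t in Set.Ioc (p i) (p (i+1)), u t ∂μ := by
      apply Finset.sum_le_sum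
      intro i hi
      exact hcellLow u hu hu01 i (Finset.mem_range.mp hi)
    have step3 : u (p N) * W N ≤ δ/2 := by
      have h1 : u (p N) * W N ≤ 1 * W N :=
        mul_le_mul_of_nonneg_right (hu01 (p N)).2 (hW0 N)
      rw [one_mul] at h1
      linarith [hWtail]
    have step4 : (0:ℝ) ≤ ∫ t in Set.Ioi (p N), u t ∂μ :=
      setIntegral_nonneg measurableSet_Ioi fun x _ => (hu01 x).1
    have h12 : (1:ℝ)/n ≤ δ/2 := hnδ
    linarith
  -- discrete AD
  have hS0 : ∀ (u : ℝ → ℝ), (∀ t, u t ∈ Set.Icc (0:ℝ) 1) → 0 ≤ S u := by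
    intro u hu01
    apply Finset.sum_nonneg
    intro i _
    exact mul_nonneg (hu01 (p i)).1 (hW0 i)
  have hAD : S f * S g ≤ S h * S k := by
    apply adChainNat (fun i => f (p i) * W i) (fun i => g (p i) * W i)
      (fun i => h (p i) * W i) (fun i => k (p i) * W i)
      (fun i => mul_nonneg (hf01 (p i)).1 (hW0 i))
      (fun i => mul_nonneg (hg01 (p i)).1 (hW0 i))
      (fun i => mul_nonneg (hh01 (p i)).1 (hW0 i))
      (fun i => mul_nonneg (hk01 (p i)).1 (hW0 i))
    intro i j
    have hWW : W i * W j = W (max i j) * W (min i j) := by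
      rcases le_total i j with hij | hij
      · rw [max_eq_right hij, min_eq_left hij, mul_comm]
      · rw [max_eq_left hij, min_eq_right hij]
    have hmax : max (p i) (p j) = p (max i j) := (hpmono.map_max).symm
    have hmin : min (p i) (p j) = p (min i j) := (hpmono.map_min).symm
    calc f (p i) * W i * (g (p j) * W j) = (f (p i) * g (p j)) * (W i * W j) := by ring
      _ ≤ (h (p (max i j)) * k (p (min i j))) * (W i * W j) := by
          apply mul_le_mul_of_nonneg_right _ (mul_nonneg (hW0 i) (hW0 j))
          rw [← hmax, ← hmin]
          exact Hyp (p i) (p j)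
      _ = h (p (max i j)) * W (max i j) * (k (p (min i j)) * W (min i j)) := by
          rw [hWW]; ring
  -- put everything together
  have hfg : (∫ t, f t ∂μ) * (∫ t, g t ∂μ) ≤ S f * S g := by
    apply mul_le_mul (hSup f hf hf01) (hSup g hg hg01) (hI0 g hg01)
      (hS0 f hf01)
  have hhk : S h * S k ≤ ((∫ t, h t ∂μ) + δ) * ((∫ t, k t ∂μ) + δ) := by
    apply mul_le_mul (hSlow h hh hh01) (hSlow k hk hk01) (hS0 k hk01)
    linarith [hI0 h hh01, hδ0]
  have hexp : ((∫ t, h t ∂μ) + δ) * ((∫ t, k t ∂μ) + δ) ≤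
      (∫ t, h t ∂μ) * (∫ t, k t ∂μ) + ε := by
    have h1 := hI1 h hh hh01
    have k1 := hI1 k hk hk01
    have h0 := hI0 h hh01
    have k0 := hI0 k hk01
    nlinarith
  linarith

lemma gaussPDFReal_le (x : ℝ) : gaussianPDFReal 0 1 x ≤ 1/2 := by
  rw [gaussianPDFReal]
  push_cast
  have hexp : Real.exp (-(x - 0)^2 / (2 * 1)) ≤ 1 := by
    rw [Real.exp_le_one_iff]
    have : (0:ℝ) ≤ (x - 0)^2 := sq_nonneg _
    nlinarith
  have hsqrt : (2:ℝ) ≤ √(2 * Real.pi * 1) := by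
    have hpi : (4:ℝ) ≤ 2 * Real.pi * 1 := by nlinarith [Real.pi_gt_three]
    calc (2:ℝ) = √4 := by
          rw [show (4:ℝ) = 2^2 by norm_num, Real.sqrt_sq (by norm_num)]
      _ ≤ _ := Real.sqrt_le_sqrt hpi
  have hinv : (√(2 * Real.pi * 1))⁻¹ ≤ 1/2 := by
    rw [show (1:ℝ)/2 = 2⁻¹ by norm_num]
    exact inv_anti₀ (by norm_num) hsqrt
  calc (√(2 * Real.pi * 1))⁻¹ * Real.exp (-(x - 0)^2 / (2 * 1))
      ≤ (√(2 * Real.pi * 1))⁻¹ * 1 :=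
        mul_le_mul_of_nonneg_left hexp (by positivity)
    _ ≤ 1/2 := by rw [mul_one]; exact hinv

/-- Gaussian measure of a measurable set is at most half its Lebesgue measure. -/
lemma gauss_set_le (s : Set ℝ) (hs : MeasurableSet s) :
    gaussianReal 0 1 s ≤ ENNReal.ofReal (1/2) * volume s := by
  rw [gaussianReal_apply 0 one_ne_zero s]
  calc ∫⁻ x in s, gaussianPDF 0 1 x ≤ ∫⁻ _ in s, ENNReal.ofReal (1/2) := by
        apply lintegral_mono
        intro x
        exact ENNReal.ofReal_le_ofReal (gaussPDFReal_le x)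
    _ = ENNReal.ofReal (1/2) * volume s := by
        rw [setLIntegral_const]

/-- The pushforward of the standard Gaussian under `abs`. -/
noncomputable def absGauss : Measure ℝ := (gaussianReal 0 1).map (fun x => |x|)

instance : IsProbabilityMeasure absGauss :=
  Measure.isProbabilityMeasure_map measurable_abs.aemeasurable

lemma absGauss_Iic : absGauss (Set.Iic (0:ℝ)) = 0 := by
  rw [absGauss, Measure.map_apply measurable_abs measurableSet_Iic]
  have : (fun x : ℝ => |x|) ⁻¹' (Set.Iic 0) = {0} := by
    ext x
    simp [abs_nonpos_iff]
  rw [this]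
  refine le_antisymm ?_ zero_le
  calc gaussianReal 0 1 {0} ≤ ENNReal.ofReal (1/2) * volume ({0} : Set ℝ) :=
        gauss_set_le _ (measurableSet_singleton 0)
    _ = 0 := by simp

lemma absGauss_Ioc (a b : ℝ) : absGauss (Set.Ioc a b) ≤ ENNReal.ofReal (b - a) := by
  rw [absGauss, Measure.map_apply measurable_abs measurableSet_Ioc]
  have hsub : (fun x : ℝ => |x|) ⁻¹' (Set.Ioc a b) ⊆ Set.Ioc a b ∪ Set.Ico (-b) (-a) := by
    intro x hx
    simp only [Set.mem_preimage, Set.mem_Ioc] at hx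
    rcases le_or_gt 0 x with hx0 | hx0
    · left
      rw [abs_of_nonneg hx0] at hx
      exact hx
    · right
      rw [abs_of_neg hx0] at hx
      constructor <;> [linarith [hx.2]; linarith [hx.1]]
  calc gaussianReal 0 1 ((fun x : ℝ => |x|) ⁻¹' (Set.Ioc a b))
      ≤ gaussianReal 0 1 (Set.Ioc a b ∪ Set.Ico (-b) (-a)) := measure_mono hsub
    _ ≤ gaussianReal 0 1 (Set.Ioc a b) + gaussianReal 0 1 (Set.Ico (-b) (-a)) :=
        measure_union_le _ _
    _ ≤ ENNReal.ofReal (1/2) * volume (Set.Ioc a b) +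
        ENNReal.ofReal (1/2) * volume (Set.Ico (-b) (-a)) := by
        gcongr
        · exact gauss_set_le _ measurableSet_Ioc
        · exact gauss_set_le _ measurableSet_Ico
    _ ≤ ENNReal.ofReal (b - a) := by
        rw [Real.volume_Ioc, Real.volume_Ico]
        rw [show -a - -b = b - a by ring]
        rw [← two_mul, ← mul_assoc]
        have : (2:ℝ≥0∞) * ENNReal.ofReal (1/2) = 1 := by
          rw [show (2:ℝ≥0∞) = ENNReal.ofReal 2 by simp, ← ENNReal.ofReal_mul (by norm_num)]
          norm_num
        rw [this, one_mul]



variable {d : ℕ}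

/-- Slice of a subset of `ℝ^{d+1}` at first coordinate `t`. -/
def sl (d : ℕ) (S : Set (Fin (d+1) → ℝ)) (t : ℝ) : Set (Fin d → ℝ) :=
  {x | Fin.cons t x ∈ S}

lemma measurable_cons (t : ℝ) : Measurable (fun x : Fin d → ℝ => (Fin.cons t x : Fin (d+1) → ℝ)) := by
  apply measurable_pi_iff.mpr
  intro i
  refine Fin.cases ?_ ?_ i
  · simpa using measurable_const
  · intro j
    simpa using measurable_pi_apply j

lemma continuous_cons (t : ℝ) :
    Continuous (fun x : Fin d → ℝ => (Fin.cons t x : Fin (d+1) → ℝ)) := by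
  apply continuous_pi
  intro i
  refine Fin.cases ?_ ?_ i
  · simpa using continuous_const
  · intro j
    simpa using continuous_apply j

lemma sl_measurable {S : Set (Fin (d+1) → ℝ)} (hS : MeasurableSet S) (t : ℝ) :
    MeasurableSet (sl d S t) := (measurable_cons t) hS

lemma sl_inter (K T : Set (Fin (d+1) → ℝ)) (t : ℝ) :
    sl d (K ∩ T) t = sl d K t ∩ sl d T t := rfl

lemma cons_combo (a b s t : ℝ) (hab : a + b = 1) (x y : Fin d → ℝ) :
    (Fin.cons (a * s + b * t) (a • x + b • y) : Fin (d+1) → ℝ)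
      = a • (Fin.cons s x : Fin (d+1) → ℝ) + b • (Fin.cons t y : Fin (d+1) → ℝ) := by
  funext i
  refine Fin.cases ?_ ?_ i
  · simp
  · intro j
    simp [Pi.smul_apply, smul_eq_mul]

lemma sl_convex {S : Set (Fin (d+1) → ℝ)} (hS : Convex ℝ S) (t : ℝ) :
    Convex ℝ (sl d S t) := by
  intro x hx y hy a b ha hb hab
  have := hS hx hy ha hb hab
  simp only [sl, Set.mem_setOf_eq]
  have heq : (Fin.cons t (a • x + b • y) : Fin (d+1) → ℝ)
      = a • (Fin.cons t x : Fin (d+1) → ℝ) + b • (Fin.cons t y : Fin (d+1) → ℝ) := by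
    have := cons_combo a b t t hab x y
    rwa [show a * t + b * t = t by rw [← add_mul, hab, one_mul]] at this
  rw [heq]
  exact this

lemma sl_uncond {S : Set (Fin (d+1) → ℝ)} (hS : Unconditional (d+1) S) (t : ℝ) :
    Unconditional d (sl d S t) := by
  intro x hx ε hε
  have h1 : ((Fin.cons 1 ε : Fin (d+1) → ℝ)) ∈ {ε' : Fin (d+1) → ℝ | ∀ i, ε' i = 1 ∨ ε' i = -1} := by
    intro i
    refine Fin.cases ?_ ?_ i
    · simp
    · intro j; simpa using hε j
  have h2 := hS _ hx (Fin.cons 1 ε) h1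
  have heq : (fun i => (Fin.cons 1 ε : Fin (d+1) → ℝ) i * (Fin.cons t x : Fin (d+1) → ℝ) i)
      = (Fin.cons t (fun j => ε j * x j) : Fin (d+1) → ℝ) := by
    funext i
    refine Fin.cases ?_ ?_ i
    · simp
    · intro j; simp
  rw [heq] at h2
  exact h2

lemma sl_even {S : Set (Fin (d+1) → ℝ)} (hS : Unconditional (d+1) S) (t : ℝ) :
    sl d S (-t) = sl d S t := by
  have key : ∀ s : ℝ, sl d S s ⊆ sl d S (-s) := by
    intro s x hx
    have h1 : ((Fin.cons (-1) (fun _ => 1) : Fin (d+1) → ℝ)) ∈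
        {ε' : Fin (d+1) → ℝ | ∀ i, ε' i = 1 ∨ ε' i = -1} := by
      intro i
      refine Fin.cases ?_ ?_ i
      · simp
      · intro j; simp
    have h2 := hS _ hx _ h1
    have heq : (fun i => (Fin.cons (-1) (fun _ => (1:ℝ)) : Fin (d+1) → ℝ) i *
        (Fin.cons s x : Fin (d+1) → ℝ) i) = (Fin.cons (-s) x : Fin (d+1) → ℝ) := by
      funext i
      refine Fin.cases ?_ ?_ i
      · simp
      · intro j; simp
    rw [heq] at h2
    exact h2
  apply le_antisymm
  · intro x hx
    have := key (-t) hx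
    rwa [neg_neg] at this
  · exact key t

lemma sl_antitone {S : Set (Fin (d+1) → ℝ)} (hSc : Convex ℝ S) (hSu : Unconditional (d+1) S)
    {s t : ℝ} (hs : 0 ≤ s) (hst : s ≤ t) : sl d S t ⊆ sl d S s := by
  intro x hx
  rcases eq_or_lt_of_le (hs.trans hst) with ht0 | ht0
  · -- t = 0, hence s = 0
    have hs0 : s = 0 := le_antisymm (hst.trans ht0.symm.le) hs
    rw [hs0, ht0]
    exact hx
  · have hx' : x ∈ sl d S (-t) := by rw [sl_even hSu]; exact hx
    -- s = a * t + b * (-t) with a = (t+s)/(2t), b = (t-s)/(2t)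
    set a : ℝ := (t + s) / (2*t) with hadef
    set b : ℝ := (t - s) / (2*t) with hbdef
    have htne : (2*t) ≠ 0 := by positivity
    have hab : a + b = 1 := by
      rw [hadef, hbdef]
      field_simp
      ring
    have ha : 0 ≤ a := div_nonneg (by linarith) (by linarith)
    have hb : 0 ≤ b := div_nonneg (by linarith) (by linarith)
    have hcomb := hSc hx hx' ha hb hab
    have hx2 : a • x + b • x = x := by rw [← add_smul, hab, one_smul]
    have hst2 : a * t + b * (-t) = s := by
      rw [hadef, hbdef]
      field_simp
      ring
    have h1 := cons_combo a b t (-t) hab x x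
    rw [hx2, hst2] at h1
    show (Fin.cons s x : Fin (d+1) → ℝ) ∈ S
    rw [h1]
    exact hcomb

instance stdGaussian_prob (d : ℕ) : IsProbabilityMeasure (stdGaussianPi d) :=
  inferInstanceAs (IsProbabilityMeasure (Measure.pi fun _ : Fin d => gaussianReal 0 1))

lemma sl_add {K T : Set (Fin (d+1) → ℝ)} {s t : ℝ} {x y : Fin d → ℝ}
    (hx : x ∈ sl d K s) (hy : y ∈ sl d T t) : x + y ∈ sl d (K + T) (s + t) := by
  show (Fin.cons (s+t) (x+y) : Fin (d+1) → ℝ) ∈ K + T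
  have heq : (Fin.cons (s+t) (x+y) : Fin (d+1) → ℝ)
      = (Fin.cons s x : Fin (d+1) → ℝ) + (Fin.cons t y : Fin (d+1) → ℝ) := by
    funext i
    refine Fin.cases ?_ ?_ i
    · simp
    · intro j; simp
  rw [heq]
  exact Set.add_mem_add hx hy

lemma sl_closed {S : Set (Fin (d+1) → ℝ)} (hS : IsClosed S) (t : ℝ) :
    IsClosed (sl d S t) := hS.preimage (continuous_cons t)

/-- The Gaussian measure disintegrates along the first coordinate. -/
lemma gaussSlice (S : Set (Fin (d+1) → ℝ)) (hS : MeasurableSet S) :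
    stdGaussianPi (d+1) S = ∫⁻ t, stdGaussianPi d (sl d S t) ∂(gaussianReal 0 1) := by
  have hmp := MeasureTheory.measurePreserving_piFinSuccAbove
    (fun _ : Fin (d+1) => gaussianReal 0 1) 0
  set e := MeasurableEquiv.piFinSuccAbove (fun _ : Fin (d+1) => ℝ) 0 with hedef
  have hsymm := hmp.symm e
  have hpre : stdGaussianPi (d+1) S
      = ((gaussianReal 0 1).prod (stdGaussianPi d)) (e.symm ⁻¹' S) := by
    rw [stdGaussianPi]
    exact (hsymm.measure_preimage hS.nullMeasurableSet).symm
  have hEm : MeasurableSet (e.symm ⁻¹' S) := e.symm.measurable hS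
  rw [hpre, Measure.prod_apply hEm]
  apply lintegral_congr
  intro t
  congr 1
  ext x
  simp only [Set.mem_preimage]
  have : e.symm (t, x) = (Fin.cons t x : Fin (d+1) → ℝ) := by
    show (Fin.insertNthEquiv (fun _ : Fin (d+1) => ℝ) 0) (t, x) = _
    simp [Fin.insertNthEquiv, Fin.insertNth_zero']
  rw [this]
  rfl

lemma meas_sl (S : Set (Fin (d+1) → ℝ)) (hS : MeasurableSet S) :
    Measurable (fun t => stdGaussianPi d (sl d S t)) := by
  set e := MeasurableEquiv.piFinSuccAbove (fun _ : Fin (d+1) => ℝ) 0 with hedef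
  have hEm : MeasurableSet (e.symm ⁻¹' S) := e.symm.measurable hS
  have := measurable_measure_prodMk_left (ν := stdGaussianPi d) hEm
  convert this using 2 with t
  congr 1
  ext x
  simp only [Set.mem_preimage]
  have : e.symm (t, x) = (Fin.cons t x : Fin (d+1) → ℝ) := by
    show (Fin.insertNthEquiv (fun _ : Fin (d+1) => ℝ) 0) (t, x) = _
    simp [Fin.insertNthEquiv, Fin.insertNth_zero']
  rw [this]
  rfl




lemma uncond_add {d : ℕ} {K T : Set (Fin d → ℝ)} (hK : Unconditional d K)
    (hT : Unconditional d T) : Unconditional d (K + T) := by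
  intro z hz ε hε
  obtain ⟨x, hx, y, hy, hxy⟩ := Set.mem_add.mp hz
  have h1 := hK x hx ε hε
  have h2 := hT y hy ε hε
  apply Set.mem_add.mpr
  refine ⟨_, h1, _, h2, ?_⟩
  funext i
  simp only [Pi.add_apply, ← hxy]
  ring

lemma uncond_inter {d : ℕ} {K T : Set (Fin d → ℝ)} (hK : Unconditional d K)
    (hT : Unconditional d T) : Unconditional d (K ∩ T) :=
  fun x hx ε hε => ⟨hK x hx.1 ε hε, hT x hx.2 ε hε⟩

lemma uncond_closure {d : ℕ} {K : Set (Fin d → ℝ)} (hK : Unconditional d K) :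
    Unconditional d (closure K) := by
  intro x hx ε hε
  have hc : Continuous (fun x : Fin d → ℝ => fun i => ε i * x i) := by
    apply continuous_pi
    intro i
    exact continuous_const.mul (continuous_apply i)
  have hm : Set.MapsTo (fun x : Fin d → ℝ => fun i => ε i * x i) K K :=
    fun y hy => hK y hy ε hε
  exact hm.closure hc hx


/-- Main induction: the strong Gaussian correlation inequality for measurable
unconditional convex sets, with a closure on the sum for measurability. -/
theorem mainInd (d : ℕ) (K T : Set (Fin d → ℝ)) (hKm : MeasurableSet K) (hTm : MeasurableSet T)
    (hKc : Convex ℝ K) (hTc : Convex ℝ T) (hKu : Unconditional d K) (hTu : Unconditional d T) :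
    stdGaussianPi d K * stdGaussianPi d T ≤
      stdGaussianPi d (closure (K + T)) * stdGaussianPi d (K ∩ T) := by
  induction d with
  | zero =>
    rcases Set.eq_empty_or_nonempty K with hK0 | hK0
    · rw [hK0]
      simp
    rcases Set.eq_empty_or_nonempty T with hT0 | hT0
    · rw [hT0]
      simp
    have hKuniv : K = Set.univ := by
      apply Set.eq_univ_of_forall
      intro x
      obtain ⟨y, hy⟩ := hK0
      rwa [Subsingleton.elim x y]
    have hTuniv : T = Set.univ := by
      apply Set.eq_univ_of_forall
      intro x
      obtain ⟨y, hy⟩ := hT0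
      rwa [Subsingleton.elim x y]
    have hsum : K + T = Set.univ := by
      apply Set.eq_univ_of_forall
      intro z
      apply Set.mem_add.mpr
      refine ⟨z, by rw [hKuniv]; trivial, z, by rw [hTuniv]; trivial, Subsingleton.elim _ _⟩
    rw [hsum, hKuniv, hTuniv, Set.univ_inter, closure_univ]
  | succ d ih =>
    set γ := stdGaussianPi with hγdef
    set W := closure (K + T) with hWdef
    have hWm : MeasurableSet W := isClosed_closure.measurableSet
    have hWc : Convex ℝ W := (hKc.add hTc).closure
    have hWu : Unconditional (d+1) W := uncond_closure (uncond_add hKu hTu)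
    have hIm : MeasurableSet (K ∩ T) := hKm.inter hTm
    have hIc : Convex ℝ (K ∩ T) := hKc.inter hTc
    have hIu : Unconditional (d+1) (K ∩ T) := uncond_inter hKu hTu
    -- the four 1-d profile functions
    have props : ∀ S : Set (Fin (d+1) → ℝ), MeasurableSet S → Convex ℝ S →
        Unconditional (d+1) S →
        Antitone (fun t => (γ d (sl d S (max t 0))).toReal) ∧
        (∀ t, (γ d (sl d S (max t 0))).toReal ∈ Set.Icc (0:ℝ) 1) ∧
        (∫ t, (γ d (sl d S (max t 0))).toReal ∂absGauss) = (γ (d+1) S).toReal := by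
      intro S hSm hSc hSu
      refine ⟨?_, ?_, ?_⟩
      · intro s t hst
        apply ENNReal.toReal_mono (measure_ne_top _ _)
        apply measure_mono
        exact sl_antitone hSc hSu (le_max_right s 0) (max_le_max hst le_rfl)
      · intro t
        constructor
        · exact ENNReal.toReal_nonneg
        · calc (γ d (sl d S (max t 0))).toReal ≤ (1 : ℝ≥0∞).toReal :=
              ENNReal.toReal_mono ENNReal.one_ne_top prob_le_one
            _ = 1 := ENNReal.toReal_one
      · -- the integral identity
        have h1 : γ (d+1) S = ∫⁻ t, γ d (sl d S t) ∂(gaussianReal 0 1) := gaussSlice S hSm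
        have h2 : ∀ t : ℝ, γ d (sl d S |t|) = γ d (sl d S t) := by
          intro t
          rcases le_or_gt 0 t with ht | ht
          · rw [abs_of_nonneg ht]
          · rw [abs_of_neg ht, sl_even hSu]
        have h3 : γ (d+1) S = ∫⁻ t, γ d (sl d S t) ∂absGauss := by
          rw [h1, absGauss, lintegral_map (meas_sl S hSm) measurable_abs]
          apply lintegral_congr
          intro t
          exact (h2 t).symm
        have h4 : γ (d+1) S = ∫⁻ t, γ d (sl d S (max t 0)) ∂absGauss := by
          rw [h3]
          apply lintegral_congr_ae
          have hae : ∀ᵐ t ∂absGauss, 0 ≤ t := by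
            rw [ae_iff]
            apply measure_mono_null _ absGauss_Iic
            intro t ht
            simp only [Set.mem_setOf_eq, not_le] at ht
            exact le_of_lt ht
          filter_upwards [hae] with t ht
          rw [max_eq_left ht]
        rw [h4]
        rw [integral_toReal]
        · exact (meas_sl S hSm).comp (measurable_id.max measurable_const) |>.aemeasurable
        · filter_upwards with t
          exact lt_of_le_of_lt prob_le_one ENNReal.one_lt_top
    obtain ⟨hfA, hf01, hfI⟩ := props K hKm hKc hKu
    obtain ⟨hgA, hg01, hgI⟩ := props T hTm hTc hTu
    obtain ⟨hhA, hh01, hhI⟩ := props W hWm hWc hWu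
    obtain ⟨hkA, hk01, hkI⟩ := props (K ∩ T) hIm hIc hIu
    -- the AD hypothesis from the induction hypothesis in dimension d
    have Hyp : ∀ s t : ℝ, (γ d (sl d K (max s 0))).toReal * (γ d (sl d T (max t 0))).toReal ≤
        (γ d (sl d W (max (max s t) 0))).toReal *
        (γ d (sl d (K ∩ T) (max (min s t) 0))).toReal := by
      intro s t
      set s' := max s 0 with hs'def
      set t' := max t 0 with ht'def
      have hs'0 : 0 ≤ s' := le_max_right _ _
      have ht'0 : 0 ≤ t' := le_max_right _ _
      have IH := ih (sl d K s') (sl d T t') (sl_measurable hKm s') (sl_measurable hTm t')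
        (sl_convex hKc s') (sl_convex hTc t') (sl_uncond hKu s') (sl_uncond hTu t')
      have hmaxeq : max (max s t) 0 = max s' t' := sup_sup_distrib_right s t 0
      have hmineq : max (min s t) 0 = min s' t' := sup_inf_right s t 0
      have hsum1 : sl d K s' + sl d T t' ⊆ sl d W (max s' t') := by
        intro z hz
        obtain ⟨x, hx, y, hy, hxy⟩ := Set.mem_add.mp hz
        have h1 : x + y ∈ sl d (K + T) (s' + t') := sl_add hx hy
        have h2 : x + y ∈ sl d W (s' + t') := subset_closure h1
        have h3 : sl d W (s' + t') ⊆ sl d W (max s' t') :=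
          sl_antitone hWc hWu (le_max_of_le_left hs'0)
            (max_le (by linarith) (by linarith))
        rw [← hxy]
        exact h3 h2
      have hsum : closure (sl d K s' + sl d T t') ⊆ sl d W (max s' t') :=
        closure_minimal hsum1 (sl_closed isClosed_closure _)
      have hint : sl d K s' ∩ sl d T t' ⊆ sl d (K ∩ T) (min s' t') := by
        rintro x ⟨hx1, hx2⟩
        rw [sl_inter]
        exact ⟨sl_antitone hKc hKu (le_min hs'0 ht'0) (min_le_left _ _) hx1,
          sl_antitone hTc hTu (le_min hs'0 ht'0) (min_le_right _ _) hx2⟩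
      have step1 : γ d (sl d K s') * γ d (sl d T t') ≤
          γ d (sl d W (max s' t')) * γ d (sl d (K ∩ T) (min s' t')) :=
        IH.trans (mul_le_mul' (measure_mono hsum) (measure_mono hint))
      have hne1 : γ d (sl d W (max s' t')) * γ d (sl d (K ∩ T) (min s' t')) ≠ ⊤ :=
        ENNReal.mul_ne_top (measure_ne_top _ _) (measure_ne_top _ _)
      have hreal := ENNReal.toReal_mono hne1 step1
      rw [ENNReal.toReal_mul, ENNReal.toReal_mul] at hreal
      rw [hmaxeq, hmineq]
      exact hreal
    -- apply the 1-d Ahlswede-Daykin inequality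
    have main := adLine absGauss absGauss_Iic absGauss_Ioc
      (fun t => (γ d (sl d K (max t 0))).toReal)
      (fun t => (γ d (sl d T (max t 0))).toReal)
      (fun t => (γ d (sl d W (max t 0))).toReal)
      (fun t => (γ d (sl d (K ∩ T) (max t 0))).toReal)
      hfA hgA hhA hkA hf01 hg01 hh01 hk01 Hyp
    rw [hfI, hgI, hhI, hkI] at main
    have hne2 : γ (d+1) K * γ (d+1) T ≠ ⊤ :=
      ENNReal.mul_ne_top (measure_ne_top _ _) (measure_ne_top _ _)
    have hne3 : γ (d+1) W * γ (d+1) (K ∩ T) ≠ ⊤ :=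
      ENNReal.mul_ne_top (measure_ne_top _ _) (measure_ne_top _ _)
    apply (ENNReal.toReal_le_toReal hne2 hne3).mp
    rw [ENNReal.toReal_mul, ENNReal.toReal_mul]
    exact main

lemma stdGaussianPi_ac (d : ℕ) : stdGaussianPi d ≪ (volume : Measure (Fin d → ℝ)) := by
  induction d with
  | zero =>
    apply Measure.AbsolutelyContinuous.mk
    intro S _ hS
    rcases Set.eq_empty_or_nonempty S with h | h
    · rw [h]; simp
    · exfalso
      have hSuniv : S = Set.univ := by
        apply Set.eq_univ_of_forall
        intro x
        obtain ⟨y, hy⟩ := h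
        rwa [Subsingleton.elim x y]
      rw [hSuniv] at hS
      have : (volume : Measure (Fin 0 → ℝ)) Set.univ = 1 := by
        have : (volume : Measure (Fin 0 → ℝ)) = Measure.pi fun _ => volume := rfl
        rw [this, Measure.pi_univ]
        simp
      rw [this] at hS
      exact one_ne_zero hS
  | succ d ih =>
    apply Measure.AbsolutelyContinuous.mk
    intro S hSm hS
    set e := MeasurableEquiv.piFinSuccAbove (fun _ : Fin (d+1) => ℝ) 0 with hedef
    have hg := (MeasureTheory.measurePreserving_piFinSuccAbove
      (fun _ : Fin (d+1) => gaussianReal 0 1) 0).symm e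
    have hv := (MeasureTheory.volume_preserving_piFinSuccAbove
      (fun _ : Fin (d+1) => ℝ) 0).symm e
    have h1 : stdGaussianPi (d+1) S
        = ((gaussianReal 0 1).prod (stdGaussianPi d)) (e.symm ⁻¹' S) :=
      (hg.measure_preimage hSm.nullMeasurableSet).symm
    have h2 : (volume : Measure (Fin (d+1) → ℝ)) S
        = ((volume : Measure ℝ).prod (volume : Measure (Fin d → ℝ))) (e.symm ⁻¹' S) :=
      (hv.measure_preimage hSm.nullMeasurableSet).symm
    rw [h1]
    apply (gaussianReal_absolutelyContinuous 0 one_ne_zero).prod ih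
    rw [← h2]
    exact hS

lemma null_frontier {d : ℕ} {S : Set (Fin d → ℝ)} (hS : Convex ℝ S) :
    stdGaussianPi d (frontier S) = 0 :=
  stdGaussianPi_ac d (hS.addHaar_frontier volume)

lemma meas_closure_le {d : ℕ} {S : Set (Fin d → ℝ)} (hS : Convex ℝ S) :
    stdGaussianPi d (closure S) ≤ stdGaussianPi d (interior S) := by
  have hsub : closure S ⊆ interior S ∪ frontier S := by
    intro x hx
    by_cases h : x ∈ interior S
    · exact Or.inl h
    · exact Or.inr ⟨hx, h⟩
  calc stdGaussianPi d (closure S) ≤ stdGaussianPi d (interior S ∪ frontier S) :=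
        measure_mono hsub
    _ ≤ stdGaussianPi d (interior S) + stdGaussianPi d (frontier S) := measure_union_le _ _
    _ = stdGaussianPi d (interior S) := by rw [null_frontier hS, add_zero]

lemma uncond_interior {d : ℕ} {K : Set (Fin d → ℝ)} (hK : Unconditional d K) :
    Unconditional d (interior K) := by
  intro x hx ε hε
  have hflip : ∀ y : Fin d → ℝ, (fun i => ε i * (fun j => ε j * y j) i) = y := by
    intro y
    funext i
    rcases hε i with h | h <;> simp [h]
  have hcont : Continuous (fun y : Fin d → ℝ => fun i => ε i * y i) := by
    apply continuous_pi
    intro i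
    exact continuous_const.mul (continuous_apply i)
  set V : Set (Fin d → ℝ) := (fun y : Fin d → ℝ => fun i => ε i * y i) ⁻¹' (interior K) with hVdef
  have hVopen : IsOpen V := isOpen_interior.preimage hcont
  have hVsub : V ⊆ K := by
    intro y hy
    have h1 : (fun i => ε i * y i) ∈ K := interior_subset hy
    have h2 := hK _ h1 ε hε
    rwa [hflip y] at h2
  have hxV : (fun i => ε i * x i) ∈ V := by
    show (fun i => ε i * (fun j => ε j * x j) i) ∈ interior K
    rw [hflip x]
    exact hx
  exact interior_maximal hVsub hVopen hxV


end SGCI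


theorem stmt3 (d : ℕ) (K T : Set (Fin d → ℝ)) (hK : Convex ℝ K) (hT : Convex ℝ T)
    (hKu : Unconditional d K) (hTu : Unconditional d T) :
    stdGaussianPi d K * stdGaussianPi d T ≤
      stdGaussianPi d (K + T) * stdGaussianPi d (K ∩ T) := by
  set γ := stdGaussianPi d with hγdef
  have main := SGCI.mainInd d (interior K) (interior T)
    isOpen_interior.measurableSet isOpen_interior.measurableSet
    hK.interior hT.interior (SGCI.uncond_interior hKu) (SGCI.uncond_interior hTu)
  have hKle : γ K ≤ γ (interior K) :=
    (measure_mono subset_closure).trans (SGCI.meas_closure_le hK)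
  have hTle : γ T ≤ γ (interior T) :=
    (measure_mono subset_closure).trans (SGCI.meas_closure_le hT)
  have hsumle : γ (closure (interior K + interior T)) ≤ γ (K + T) := by
    have h1 : closure (interior K + interior T) ⊆ closure (K + T) :=
      closure_mono (Set.add_subset_add interior_subset interior_subset)
    calc γ (closure (interior K + interior T)) ≤ γ (closure (K + T)) := measure_mono h1
      _ ≤ γ (interior (K + T)) := SGCI.meas_closure_le (hK.add hT)
      _ ≤ γ (K + T) := measure_mono interior_subset
  have hintle : γ (interior K ∩ interior T) ≤ γ (K ∩ T) :=
    measure_mono (Set.inter_subset_inter interior_subset interior_subset)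
  calc γ K * γ T ≤ γ (interior K) * γ (interior T) := mul_le_mul' hKle hTle
    _ ≤ γ (closure (interior K + interior T)) * γ (interior K ∩ interior T) := main
    _ ≤ γ (K + T) * γ (K ∩ T) := mul_le_mul' hsumle hintle
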